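/- There is an absolute constant $C > 0$ such that the following holds. Let $P$ be a natural number, let $S$ be a set of primes all less than $P$, let $N \ge P^3$ be a natural number, and let $f : \mathbb{N} \to \mathbb{C}$ satisfy $|f(n)| \le 1$ for all $n$. Then $\sum_{p \in S} \frac{1}{p} \left| \frac{1}{N} \sum_{n \le N} f(n)\,(1 - p\,\mathbb{1}_{p \mid n}) \right|^2 \le C$. -/

import Mathlib

open Finset ComplexConjugate


lemma tk_indSum (N d : ℕ) :
    ∑ n ∈ Icc 1 N, (if d ∣ n then (1:ℝ) else 0) = ((N / d : ℕ) : ℝ) := by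
  rw [Finset.sum_boole]
  norm_num
  rw [show Icc 1 N = Ioc 0 N from by rw [← Finset.Icc_add_one_left_eq_Ioc, zero_add]]
  exact Nat.Ioc_filter_dvd_card_eq_div N d

lemma tk_cast_div_lb (N d : ℕ) (hd : 0 < d) : (N:ℝ)/d - 1 ≤ ((N/d : ℕ) : ℝ) := by
  have key : N < d * (N / d) + d := by
    conv_lhs => rw [← Nat.div_add_mod N d]
    exact Nat.add_lt_add_left (Nat.mod_lt N hd) _
  have hkey : (N:ℝ) < d * ((N/d : ℕ) : ℝ) + d := by exact_mod_cast key
  have hd' : (0:ℝ) < d := by exact_mod_cast hd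
  rw [sub_le_iff_le_add, div_le_iff₀ hd']
  nlinarith

noncomputable def tkE (p n : ℕ) : ℝ := (if p ∣ n then 1 else 0) - 1/p

noncomputable def tkM (N p q : ℕ) : ℝ := ∑ n ∈ Icc 1 N, tkE p n * tkE q n

lemma tkM_diag (N : ℕ) {p : ℕ} (hp : p.Prime) : tkM N p p ≤ (N:ℝ)/p := by
  have hp2 : (2:ℝ) ≤ p := by exact_mod_cast hp.two_le
  have hp0 : (0:ℝ) < p := by linarith
  have expand : ∀ n, tkE p n * tkE p n
      = (if p ∣ n then (1:ℝ) else 0) * (1 - 2/p) + 1/p^2 := by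
    intro n; unfold tkE
    by_cases h : p ∣ n <;> simp [h] <;> field_simp <;> ring
  unfold tkM
  rw [Finset.sum_congr rfl fun n _ => expand n]
  rw [Finset.sum_add_distrib, ← Finset.sum_mul, tk_indSum, Finset.sum_const, Nat.card_Icc]
  simp only [Nat.add_sub_cancel, nsmul_eq_mul]
  have h1 : ((N/p : ℕ) : ℝ) ≤ (N:ℝ)/p := Nat.cast_div_le
  have h2 : (0:ℝ) ≤ 1 - 2/p := by
    rw [sub_nonneg, div_le_one hp0]; linarith
  have h3 : ((N/p : ℕ) : ℝ) * (1 - 2/p) ≤ (N:ℝ)/p * (1 - 2/p) :=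
    mul_le_mul_of_nonneg_right h1 h2
  have h4 : (N:ℝ)/p * (1 - 2/p) + N * (1/p^2) = (N:ℝ)/p - N/p^2 := by
    field_simp
    ring
  have h5 : (0:ℝ) ≤ (N:ℝ)/p^2 := by positivity
  linarith

lemma tkM_off (N : ℕ) {p q : ℕ} (hp : p.Prime) (hq : q.Prime) (hne : p ≠ q) :
    |tkM N p q| ≤ 1 := by
  have hcop : Nat.Coprime p q := (Nat.coprime_primes hp hq).mpr hne
  have hp2 : (2:ℝ) ≤ p := by exact_mod_cast hp.two_le
  have hq2 : (2:ℝ) ≤ q := by exact_mod_cast hq.two_le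
  have hp0 : (0:ℝ) < p := by linarith
  have hq0 : (0:ℝ) < q := by linarith
  have expand : ∀ n, tkE p n * tkE q n
      = (if p*q ∣ n then (1:ℝ) else 0) - (1/q) * (if p ∣ n then (1:ℝ) else 0)
        - (1/p) * (if q ∣ n then (1:ℝ) else 0) + 1/(p*q) := by
    intro n; unfold tkE
    have hiff : p*q ∣ n ↔ (p ∣ n ∧ q ∣ n) := by
      constructor
      · intro h; exact ⟨dvd_trans (Dvd.intro q rfl) h, dvd_trans (Dvd.intro_left p rfl) h⟩
      · rintro ⟨h1, h2⟩; exact hcop.mul_dvd_of_dvd_of_dvd h1 h2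
    by_cases h1 : p ∣ n <;> by_cases h2 : q ∣ n <;>
      simp [h1, h2, hiff] <;> field_simp <;> ring
  unfold tkM
  rw [Finset.sum_congr rfl fun n _ => expand n]
  rw [Finset.sum_add_distrib, Finset.sum_sub_distrib, Finset.sum_sub_distrib,
    ← Finset.mul_sum, ← Finset.mul_sum, tk_indSum, tk_indSum, tk_indSum,
    Finset.sum_const, Nat.card_Icc]
  simp only [Nat.add_sub_cancel, nsmul_eq_mul]
  have hx1 : ((N/(p*q) : ℕ) : ℝ) ≤ (N:ℝ)/(↑p*↑q) := by
    have := Nat.cast_div_le (α := ℝ) (m := N) (n := p*q)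
    push_cast at this ⊢; linarith
  have hx2 : (N:ℝ)/(↑p*↑q) - 1 ≤ ((N/(p*q) : ℕ) : ℝ) := by
    have := tk_cast_div_lb N (p*q) (Nat.mul_pos hp.pos hq.pos)
    push_cast at this ⊢; linarith
  have hy1 : ((N/p : ℕ) : ℝ) ≤ (N:ℝ)/p := Nat.cast_div_le
  have hy2 : (N:ℝ)/p - 1 ≤ ((N/p : ℕ) : ℝ) := tk_cast_div_lb N p hp.pos
  have hz1 : ((N/q : ℕ) : ℝ) ≤ (N:ℝ)/q := Nat.cast_div_le
  have hz2 : (N:ℝ)/q - 1 ≤ ((N/q : ℕ) : ℝ) := tk_cast_div_lb N q hq.pos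
  have h5 : (1/(q:ℝ)) * ((N:ℝ)/p) = (N:ℝ)/(↑p*↑q) := by
    rw [div_mul_div_comm, one_mul, mul_comm]
  have h6 : (1/(p:ℝ)) * ((N:ℝ)/q) = (N:ℝ)/(↑p*↑q) := by
    rw [div_mul_div_comm, one_mul]
  have h7 : (N:ℝ) * (1/(↑p*↑q)) = (N:ℝ)/(↑p*↑q) := by ring
  have hq0' : (0:ℝ) ≤ 1/q := by positivity
  have hp0' : (0:ℝ) ≤ 1/p := by positivity
  rw [abs_le]
  constructor
  · have e1 : (1/(q:ℝ)) * ((N/p : ℕ) : ℝ) ≤ (N:ℝ)/(↑p*↑q) := by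
      rw [← h5]; exact mul_le_mul_of_nonneg_left hy1 hq0'
    have e2 : (1/(p:ℝ)) * ((N/q : ℕ) : ℝ) ≤ (N:ℝ)/(↑p*↑q) := by
      rw [← h6]; exact mul_le_mul_of_nonneg_left hz1 hp0'
    linarith
  · have e1 : (N:ℝ)/(↑p*↑q) - 1/q ≤ (1/(q:ℝ)) * ((N/p : ℕ) : ℝ) := by
      have := mul_le_mul_of_nonneg_left hy2 hq0'
      rw [mul_sub, h5, mul_one] at this; linarith
    have e2 : (N:ℝ)/(↑p*↑q) - 1/p ≤ (1/(p:ℝ)) * ((N/q : ℕ) : ℝ) := by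
      have := mul_le_mul_of_nonneg_left hz2 hp0'
      rw [mul_sub, h6, mul_one] at this; linarith
    have h8 : (1/(p:ℝ)) + 1/q ≤ 1 := by
      rw [div_add_div _ _ (ne_of_gt hp0) (ne_of_gt hq0), div_le_one (by positivity)]
      nlinarith [mul_nonneg (by linarith : (0:ℝ) ≤ (p:ℝ) - 2) (by linarith : (0:ℝ) ≤ (q:ℝ) - 2)]
    linarith

noncomputable def tkB (N : ℕ) (f : ℕ → ℂ) (p : ℕ) : ℂ :=
  (1/(N:ℂ)) * ∑ n ∈ Icc 1 N, f n * (tkE p n : ℂ)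

lemma tkStep1 (N : ℕ) (f : ℕ → ℂ) {p : ℕ} (hp : p ≠ 0) :
    (1/(N:ℂ)) * ∑ n ∈ Icc 1 N, f n * (1 - (p:ℂ) * (if p ∣ n then 1 else 0))
      = -(p:ℂ) * tkB N f p := by
  have key : ∑ n ∈ Icc 1 N, f n * (1 - (p:ℂ) * (if p ∣ n then 1 else 0))
      = -(p:ℂ) * ∑ n ∈ Icc 1 N, f n * (tkE p n : ℂ) := by
    rw [Finset.mul_sum]
    apply Finset.sum_congr rfl
    intro n _
    unfold tkE
    have hp' : (p:ℂ) ≠ 0 := Nat.cast_ne_zero.mpr hp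
    push_cast [apply_ite (fun (x:ℝ) => (x:ℂ))]
    by_cases h : p ∣ n <;> simp [h] <;> field_simp <;> ring
  rw [key, tkB]
  ring

open ComplexConjugate in
lemma tkExpand (N : ℕ) (S : Finset ℕ) (c : ℕ → ℂ) :
    ∑ n ∈ Icc 1 N, ((∑ p ∈ S, c p * (tkE p n : ℂ)) * conj (∑ q ∈ S, c q * (tkE q n : ℂ)))
      = ∑ p ∈ S, ∑ q ∈ S, c p * conj (c q) * (tkM N p q : ℂ) := by
  have hconj : ∀ n, conj (∑ q ∈ S, c q * (tkE q n : ℂ))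
      = ∑ q ∈ S, conj (c q) * (tkE q n : ℂ) := by
    intro n
    rw [map_sum]
    exact Finset.sum_congr rfl fun q _ => by rw [map_mul, Complex.conj_ofReal]
  calc ∑ n ∈ Icc 1 N, ((∑ p ∈ S, c p * (tkE p n : ℂ)) * conj (∑ q ∈ S, c q * (tkE q n : ℂ)))
      = ∑ n ∈ Icc 1 N, ∑ p ∈ S, ∑ q ∈ S,
          c p * conj (c q) * ((tkE p n : ℂ) * (tkE q n : ℂ)) := by
        apply Finset.sum_congr rfl; intro n _
        rw [hconj, Finset.sum_mul_sum]
        exact Finset.sum_congr rfl fun p _ => Finset.sum_congr rfl fun q _ => by ring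
    _ = ∑ p ∈ S, ∑ q ∈ S, ∑ n ∈ Icc 1 N,
          c p * conj (c q) * ((tkE p n : ℂ) * (tkE q n : ℂ)) := by
        rw [Finset.sum_comm]
        exact Finset.sum_congr rfl fun p _ => Finset.sum_comm
    _ = ∑ p ∈ S, ∑ q ∈ S, c p * conj (c q) * (tkM N p q : ℂ) := by
        apply Finset.sum_congr rfl; intro p _
        apply Finset.sum_congr rfl; intro q _
        rw [← Finset.mul_sum]
        congr 1
        unfold tkM
        push_cast
        rfl

/-- Turán–Kubilius type inequality: there is an absolute constant `C > 0` such that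
for any set `S` of primes less than `P`, any `N ≥ P³` and any 1-bounded `f : ℕ → ℂ`,
`∑_{p ∈ S} (1/p) * |(1/N) ∑_{n ≤ N} f n (1 - p·𝟙_{p ∣ n})|² ≤ C`. -/
theorem turan_kubilius :
    ∃ C : ℝ, 0 < C ∧
      ∀ (P N : ℕ) (S : Finset ℕ) (f : ℕ → ℂ),
        (∀ p ∈ S, p.Prime ∧ p < P) → P ^ 3 ≤ N → (∀ n, ‖f n‖ ≤ 1) →
        ∑ p ∈ S, (1 / (p : ℝ)) *
            ‖(1 / (N : ℂ)) * ∑ n ∈ Finset.Icc 1 N,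
                f n * (1 - (p : ℂ) * (if p ∣ n then 1 else 0))‖ ^ 2 ≤ C := by
  refine ⟨5, by norm_num, ?_⟩
  intro P N S f hS hN hf
  rcases S.eq_empty_or_nonempty with rfl | ⟨p₀, hp₀⟩
  · simp
  have hP3 : 3 ≤ P := by
    have h := hS p₀ hp₀
    have := h.1.two_le
    omega
  have hN0 : 0 < N := by
    have : 27 ≤ P ^ 3 := le_trans (by norm_num) (Nat.pow_le_pow_left hP3 3)
    omega
  have hNr : (0:ℝ) < N := by exact_mod_cast hN0
  -- Step 1 : rewrite each summand
  have step1 : ∀ p ∈ S, (1/(p:ℝ)) *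
      ‖(1/(N:ℂ)) * ∑ n ∈ Finset.Icc 1 N,
        f n * (1 - (p:ℂ) * (if p ∣ n then 1 else 0))‖ ^ 2
      = (p:ℝ) * ‖tkB N f p‖^2 := by
    intro p hp
    have hpp := (hS p hp).1
    rw [tkStep1 N f hpp.pos.ne']
    rw [norm_mul, norm_neg, Complex.norm_natCast]
    have hp0 : (0:ℝ) < p := by exact_mod_cast hpp.pos
    field_simp
  rw [Finset.sum_congr rfl step1]
  set B : ℕ → ℂ := tkB N f with hB
  set Q : ℝ := ∑ p ∈ S, (p:ℝ) * ‖B p‖^2 with hQ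
  have hQ0 : 0 ≤ Q := Finset.sum_nonneg fun p _ => by positivity
  set c : ℕ → ℂ := fun p => (p:ℂ) * B p with hcdef
  set g : ℕ → ℂ := fun n => ∑ p ∈ S, c p * (tkE p n : ℂ) with hgdef
  -- identity A
  have hA : ((Q:ℝ):ℂ) = (1/(N:ℂ)) * ∑ n ∈ Icc 1 N, f n * conj (g n) := by
    have h1 : ∀ n, f n * conj (g n)
        = ∑ p ∈ S, ((p:ℂ) * conj (B p)) * (f n * (tkE p n : ℂ)) := by
      intro n
      rw [hgdef, map_sum, Finset.mul_sum]
      apply Finset.sum_congr rfl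
      intro p _
      rw [hcdef, map_mul, map_mul, Complex.conj_ofReal, map_natCast]
      ring
    have h2 : (1/(N:ℂ)) * ∑ n ∈ Icc 1 N, f n * conj (g n)
        = ∑ p ∈ S, ((p:ℂ) * conj (B p)) * ((1/(N:ℂ)) * ∑ n ∈ Icc 1 N, f n * (tkE p n : ℂ)) := by
      simp only [h1]
      rw [Finset.sum_comm, Finset.mul_sum]
      apply Finset.sum_congr rfl
      intro p _
      rw [← Finset.mul_sum]
      ring
    rw [h2]
    have h3 : ∀ p ∈ S, ((p:ℂ) * conj (B p)) * ((1/(N:ℂ)) * ∑ n ∈ Icc 1 N, f n * (tkE p n : ℂ))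
        = (((p:ℝ) * ‖B p‖^2 : ℝ) : ℂ) := by
      intro p _
      have : (1/(N:ℂ)) * ∑ n ∈ Icc 1 N, f n * (tkE p n : ℂ) = B p := by rw [hB]; rfl
      rw [this]
      push_cast
      rw [mul_assoc, mul_comm (conj (B p)) (B p), Complex.mul_conj']
    rw [Finset.sum_congr rfl h3, hQ]
    push_cast
    try rfl

  -- Q ≤ (1/N) * ∑ ‖g n‖
  have hQle : Q ≤ (1/(N:ℝ)) * ∑ n ∈ Icc 1 N, ‖g n‖ := by
    have h1 : Q = ‖((Q:ℝ):ℂ)‖ := by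
      rw [Complex.norm_real, Real.norm_eq_abs, abs_of_nonneg hQ0]
    rw [h1, hA, norm_mul]
    have h2 : ‖(1/(N:ℂ))‖ = 1/(N:ℝ) := by
      rw [norm_div, norm_one, Complex.norm_natCast]
    rw [h2]
    apply mul_le_mul_of_nonneg_left _ (by positivity)
    calc ‖∑ n ∈ Icc 1 N, f n * conj (g n)‖ ≤ ∑ n ∈ Icc 1 N, ‖f n * conj (g n)‖ :=
        norm_sum_le _ _
      _ ≤ ∑ n ∈ Icc 1 N, ‖g n‖ := by
        apply Finset.sum_le_sum
        intro n _
        rw [norm_mul, RCLike.norm_conj]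
        exact mul_le_of_le_one_left (norm_nonneg _) (hf n)
  -- core bound : ∑ ‖g n‖² ≤ 2 N Q
  have hcore : ∑ n ∈ Icc 1 N, ‖g n‖^2 ≤ 2 * N * Q := by
    have hcnorm : ∀ p : ℕ, ‖c p‖ = (p:ℝ) * ‖B p‖ := by
      intro p
      rw [hcdef]
      simp [norm_mul]
    set T : ℝ := ∑ q ∈ S, ‖B q‖ with hT
    have hT0 : 0 ≤ T := Finset.sum_nonneg fun q _ => norm_nonneg _
    have h1 : ∑ n ∈ Icc 1 N, ‖g n‖^2 = (∑ n ∈ Icc 1 N, g n * conj (g n)).re := by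
      rw [Complex.re_sum]
      apply Finset.sum_congr rfl
      intro n _
      rw [Complex.mul_conj']
      norm_cast
    have h2 : ∑ n ∈ Icc 1 N, g n * conj (g n)
        = ∑ p ∈ S, ∑ q ∈ S, c p * conj (c q) * (tkM N p q : ℂ) := tkExpand N S c
    have h3 : (∑ p ∈ S, ∑ q ∈ S, c p * conj (c q) * (tkM N p q : ℂ)).re
        = ∑ p ∈ S, ∑ q ∈ S, (c p * conj (c q)).re * tkM N p q := by
      rw [Complex.re_sum]
      apply Finset.sum_congr rfl
      intro p _
      rw [Complex.re_sum]
      apply Finset.sum_congr rfl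
      intro q _
      simp [Complex.mul_re]
    rw [h1, h2, h3]
    have key : ∀ p ∈ S, ∑ q ∈ S, (c p * conj (c q)).re * tkM N p q
        ≤ (N:ℝ) * ((p:ℝ) * ‖B p‖^2) + (P:ℝ)^2 * ‖B p‖ * T := by
      intro p hp
      obtain ⟨hpp, hpP⟩ := hS p hp
      have hp0 : (0:ℝ) < p := by exact_mod_cast hpp.pos
      rw [← Finset.add_sum_erase _ _ hp]
      have hdiag : (c p * conj (c p)).re * tkM N p p ≤ (N:ℝ) * ((p:ℝ) * ‖B p‖^2) := by
        have hre : (c p * conj (c p)).re = ‖c p‖^2 := by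
          rw [Complex.mul_conj']
          norm_cast
        rw [hre, hcnorm p]
        have hM := tkM_diag N hpp
        calc ((p:ℝ) * ‖B p‖)^2 * tkM N p p ≤ ((p:ℝ) * ‖B p‖)^2 * ((N:ℝ)/p) :=
            mul_le_mul_of_nonneg_left hM (by positivity)
          _ = (N:ℝ) * ((p:ℝ) * ‖B p‖^2) := by field_simp
      have hoff : ∑ q ∈ S.erase p, (c p * conj (c q)).re * tkM N p q
          ≤ (P:ℝ)^2 * ‖B p‖ * T := by
        calc ∑ q ∈ S.erase p, (c p * conj (c q)).re * tkM N p q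
            ≤ ∑ q ∈ S.erase p, (P:ℝ)^2 * (‖B p‖ * ‖B q‖) := by
              apply Finset.sum_le_sum
              intro q hq
              have hqS := Finset.mem_of_mem_erase hq
              have hqne : q ≠ p := Finset.ne_of_mem_erase hq
              obtain ⟨hqq, hqP⟩ := hS q hqS
              have hq0 : (0:ℝ) < q := by exact_mod_cast hqq.pos
              have ha1 : |(c p * conj (c q)).re| ≤ ‖c p‖ * ‖c q‖ := by
                calc |(c p * conj (c q)).re| ≤ ‖c p * conj (c q)‖ := Complex.abs_re_le_norm _
                  _ = ‖c p‖ * ‖c q‖ := by rw [norm_mul, RCLike.norm_conj]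
              have ha2 : |tkM N p q| ≤ 1 := tkM_off N hpp hqq (fun h => hqne h.symm)
              calc (c p * conj (c q)).re * tkM N p q
                  ≤ |(c p * conj (c q)).re * tkM N p q| := le_abs_self _
                _ = |(c p * conj (c q)).re| * |tkM N p q| := abs_mul _ _
                _ ≤ (‖c p‖ * ‖c q‖) * 1 :=
                    mul_le_mul ha1 ha2 (abs_nonneg _) (by positivity)
                _ = ((p:ℝ) * ‖B p‖) * ((q:ℝ) * ‖B q‖) := by rw [mul_one, hcnorm, hcnorm]
                _ ≤ (P:ℝ)^2 * (‖B p‖ * ‖B q‖) := by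
                    have hpP' : (p:ℝ) ≤ P := by exact_mod_cast hpP.le
                    have hqP' : (q:ℝ) ≤ P := by exact_mod_cast hqP.le
                    have hpq : (p:ℝ) * q ≤ (P:ℝ)^2 := by nlinarith
                    calc ((p:ℝ) * ‖B p‖) * ((q:ℝ) * ‖B q‖)
                        = ((p:ℝ) * q) * (‖B p‖ * ‖B q‖) := by ring
                      _ ≤ (P:ℝ)^2 * (‖B p‖ * ‖B q‖) :=
                          mul_le_mul_of_nonneg_right hpq (by positivity)
          _ ≤ ∑ q ∈ S, (P:ℝ)^2 * (‖B p‖ * ‖B q‖) := by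
              apply Finset.sum_le_sum_of_subset_of_nonneg (Finset.erase_subset _ _)
              intro q _ _
              positivity
          _ = (P:ℝ)^2 * ‖B p‖ * T := by
              rw [hT, Finset.mul_sum]
              apply Finset.sum_congr rfl
              intro q _
              ring
      linarith
    have hsum1 : ∑ p ∈ S, ((N:ℝ) * ((p:ℝ) * ‖B p‖^2) + (P:ℝ)^2 * ‖B p‖ * T)
        = (N:ℝ) * Q + (P:ℝ)^2 * T * T := by
      rw [Finset.sum_add_distrib, ← Finset.mul_sum, ← hQ]
      congr 1
      have hrw : ∀ p ∈ S, (P:ℝ)^2 * ‖B p‖ * T = ((P:ℝ)^2 * T) * ‖B p‖ := fun p _ => by ring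
      rw [Finset.sum_congr rfl hrw, ← Finset.mul_sum, ← hT]
      try ring
    have hcard : (S.card : ℝ) ≤ P := by
      have : S ⊆ Finset.range P := fun p hp => Finset.mem_range.mpr (hS p hp).2
      have := Finset.card_le_card this
      simp only [Finset.card_range] at this
      exact_mod_cast this
    have hsubQ : ∑ q ∈ S, ‖B q‖^2 ≤ Q := by
      rw [hQ]
      apply Finset.sum_le_sum
      intro q hq
      have hq1 : (1:ℝ) ≤ q := by exact_mod_cast (hS q hq).1.one_lt.le
      nlinarith [sq_nonneg ‖B q‖]
    have hTsq : T^2 ≤ (S.card : ℝ) * ∑ q ∈ S, ‖B q‖^2 := by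
      rw [hT]
      exact sq_sum_le_card_mul_sum_sq
    have hPN : (P:ℝ)^3 ≤ (N:ℝ) := by exact_mod_cast hN
    have hP0 : (0:ℝ) ≤ P := Nat.cast_nonneg P
    have hTbound : (P:ℝ)^2 * T * T ≤ (N:ℝ) * Q := by
      have hsq : ∑ q ∈ S, ‖B q‖^2 ≤ Q := hsubQ
      have hsq0 : (0:ℝ) ≤ ∑ q ∈ S, ‖B q‖^2 := Finset.sum_nonneg fun q _ => sq_nonneg _
      have hc0 : (0:ℝ) ≤ (S.card : ℝ) := Nat.cast_nonneg _
      calc (P:ℝ)^2 * T * T = (P:ℝ)^2 * T^2 := by ring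
        _ ≤ (P:ℝ)^2 * ((S.card : ℝ) * ∑ q ∈ S, ‖B q‖^2) :=
            mul_le_mul_of_nonneg_left hTsq (by positivity)
        _ ≤ (P:ℝ)^2 * ((P:ℝ) * Q) := by
            apply mul_le_mul_of_nonneg_left _ (by positivity)
            exact mul_le_mul hcard hsq hsq0 hP0
        _ = (P:ℝ)^3 * Q := by ring
        _ ≤ (N:ℝ) * Q := mul_le_mul_of_nonneg_right hPN hQ0
    calc ∑ p ∈ S, ∑ q ∈ S, (c p * conj (c q)).re * tkM N p q
        ≤ ∑ p ∈ S, ((N:ℝ) * ((p:ℝ) * ‖B p‖^2) + (P:ℝ)^2 * ‖B p‖ * T) :=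
          Finset.sum_le_sum key
      _ = (N:ℝ) * Q + (P:ℝ)^2 * T * T := hsum1
      _ ≤ (N:ℝ) * Q + (N:ℝ) * Q := by linarith
      _ = 2 * N * Q := by ring
  -- Cauchy-Schwarz
  have hCS : (∑ n ∈ Icc 1 N, ‖g n‖)^2 ≤ N * ∑ n ∈ Icc 1 N, ‖g n‖^2 := by
    have := sq_sum_le_card_mul_sum_sq (s := Icc 1 N) (f := fun n => ‖g n‖)
    simpa [Nat.card_Icc] using this
  -- combine
  have hQ2 : Q^2 ≤ 2*Q := by
    have h1 : Q^2 ≤ ((1/(N:ℝ)) * ∑ n ∈ Icc 1 N, ‖g n‖)^2 := by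
      apply pow_le_pow_left₀ hQ0 hQle
    have h2 : ((1/(N:ℝ)) * ∑ n ∈ Icc 1 N, ‖g n‖)^2
        = (1/(N:ℝ))^2 * (∑ n ∈ Icc 1 N, ‖g n‖)^2 := by ring
    have h3 : (1/(N:ℝ))^2 * (∑ n ∈ Icc 1 N, ‖g n‖)^2
        ≤ (1/(N:ℝ))^2 * (N * ∑ n ∈ Icc 1 N, ‖g n‖^2) :=
      mul_le_mul_of_nonneg_left hCS (by positivity)
    have h4 : (1/(N:ℝ))^2 * (N * ∑ n ∈ Icc 1 N, ‖g n‖^2)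
        ≤ (1/(N:ℝ))^2 * (N * (2 * N * Q)) :=
      mul_le_mul_of_nonneg_left (mul_le_mul_of_nonneg_left hcore (by positivity)) (by positivity)
    have h5 : (1/(N:ℝ))^2 * (N * (2 * N * Q)) = 2*Q := by
      field_simp
    linarith
  nlinarith
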